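/- arXiv:1703.06565 — 2 statements merged into one kernel-verified Lean document; each statement's English description precedes it below -/
import Mathlib

section
/- The pignistic probability distribution BetP is compatible with the underlying BPA: for every B ⊆ Θ, Bl(B) ≤ Σ_{θ∈B} BetP(θ) ≤ Pl(B). -/
open Finset

/-- the pignistic distribution is compatible with the BPA:
    Bl(B) ≤ Σ_{θ∈B} BetP(θ) ≤ Pl(B). -/
theorem betP_compatible {Θ : Type*} [Fintype Θ] [DecidableEq Θ] [Nonempty Θ]
    (m : Finset Θ → ℝ)
    (h0 : ∀ B, 0 ≤ m B) (h1 : ∀ B, m B ≤ 1)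
    (hempty : m ∅ = 0)
    (htotal : ∑ B : Finset Θ, m B = 1)
    (BetP : Θ → ℝ)
    (hBetP : ∀ θ : Θ, BetP θ = ∑ B ∈ Finset.univ.filter (fun B : Finset Θ => θ ∈ B),
        m B / B.card)
    (B : Finset Θ) :
    (∑ C ∈ B.powerset, m C) ≤ (∑ θ ∈ B, BetP θ) ∧
    (∑ θ ∈ B, BetP θ) ≤ 1 - ∑ C ∈ Bᶜ.powerset, m C := by
  have key : ∑ θ ∈ B, BetP θ =
      ∑ C : Finset Θ, ((B ∩ C).card : ℝ) * (m C / C.card) := by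
    simp_rw [hBetP, Finset.sum_filter]
    rw [Finset.sum_comm]
    congr 1
    ext C
    rw [Finset.sum_ite_mem, Finset.inter_comm]
    simp [Finset.sum_const, nsmul_eq_mul, Finset.inter_comm]
  have hterm_nonneg : ∀ C : Finset Θ, 0 ≤ ((B ∩ C).card : ℝ) * (m C / C.card) := by
    intro C
    exact mul_nonneg (Nat.cast_nonneg _) (div_nonneg (h0 C) (Nat.cast_nonneg _))
  constructor
  · rw [key]
    have h1' : ∑ C ∈ B.powerset, m C =
        ∑ C ∈ B.powerset, ((B ∩ C).card : ℝ) * (m C / C.card) := by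
      apply Finset.sum_congr rfl
      intro C hC
      rw [Finset.mem_powerset] at hC
      rw [Finset.inter_eq_right.mpr hC]
      rcases eq_or_ne C ∅ with h | h
      · simp [h, hempty]
      · have : (C.card : ℝ) ≠ 0 := by
          simpa using Finset.nonempty_iff_ne_empty.mpr h |>.card_pos.ne'
        field_simp
    rw [h1']
    exact Finset.sum_le_sum_of_subset_of_nonneg (Finset.subset_univ _)
      (fun C _ _ => hterm_nonneg C)
  · rw [key]
    have hsplit : (1 : ℝ) - ∑ C ∈ Bᶜ.powerset, m C =
        ∑ C ∈ (Finset.univ : Finset (Finset Θ)) \ Bᶜ.powerset, m C := by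
      rw [Finset.sum_sdiff_eq_sub (Finset.subset_univ _), htotal]
    rw [hsplit]
    have hzero : ∀ C ∈ Bᶜ.powerset, ((B ∩ C).card : ℝ) * (m C / C.card) = 0 := by
      intro C hC
      rw [Finset.mem_powerset] at hC
      have : B ∩ C = ∅ := by
        rw [← Finset.disjoint_iff_inter_eq_empty]
        exact Finset.disjoint_left.mpr fun a ha haC => by
          have := hC haC; simp at this; exact this ha
      simp [this]
    calc ∑ C : Finset Θ, ((B ∩ C).card : ℝ) * (m C / C.card)
        = ∑ C ∈ (Finset.univ : Finset (Finset Θ)) \ Bᶜ.powerset,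
            ((B ∩ C).card : ℝ) * (m C / C.card) := by
          rw [eq_comm]
          apply Finset.sum_subset (Finset.subset_univ _)
          intro C _ hC
          apply hzero
          simpa using hC
      _ ≤ ∑ C ∈ (Finset.univ : Finset (Finset Θ)) \ Bᶜ.powerset, m C := by
          apply Finset.sum_le_sum
          intro C _
          rcases eq_or_ne C ∅ with h | h
          · simp [h, hempty]
          · have hc : (0:ℝ) < C.card := by
              exact_mod_cast (Finset.nonempty_iff_ne_empty.mpr h).card_pos
            rw [mul_div_assoc']
            rw [div_le_iff₀ hc]
            have : ((B ∩ C).card : ℝ) ≤ C.card := by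
              exact_mod_cast Finset.card_le_card (Finset.inter_subset_right)
            calc ((B ∩ C).card : ℝ) * m C ≤ (C.card : ℝ) * m C :=
                  mul_le_mul_of_nonneg_right this (h0 C)
              _ = m C * C.card := mul_comm _ _
end

section
/- Under the Conditional Core Theorem hypotheses, if no focal element of m straddles the conditioning event A and its complement (i.e., every focal element is contained in A or in Θ\A), and Bl(A)>0, then the conditional core with respect to A equals in(A) = {B ∈ F : B ⊆ A}, the set of focal elements contained in A. -/
open Finset

private lemma alt_sum_real {α : Type*} [DecidableEq α] (x : Finset α) :
    (∑ E ∈ x.powerset, (-1 : ℝ) ^ E.card) = if x = ∅ then 1 else 0 := by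
  have h := Finset.sum_powerset_neg_one_pow_card (x := x)
  have : ((∑ E ∈ x.powerset, (-1 : ℤ) ^ E.card : ℤ) : ℝ)
      = ∑ E ∈ x.powerset, (-1 : ℝ) ^ E.card := by push_cast; rfl
  rw [← this, h]
  split_ifs <;> simp

private lemma inner_alt {α : Type*} [DecidableEq α] (B D : Finset α) (hD : D ⊆ B) :
    (∑ C ∈ B.powerset.filter (fun C => D ⊆ C), (-1 : ℝ) ^ (B \ C).card)
      = if D = B then 1 else 0 := by
  have hbij : (∑ C ∈ B.powerset.filter (fun C => D ⊆ C), (-1 : ℝ) ^ (B \ C).card)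
      = ∑ E ∈ (B \ D).powerset, (-1 : ℝ) ^ E.card := by
    refine Finset.sum_nbij' (fun C => B \ C) (fun E => B \ E) ?_ ?_ ?_ ?_ ?_
    · intro C hC
      simp only [mem_filter, mem_powerset] at hC ⊢
      exact sdiff_subset_sdiff (le_refl B) hC.2
    · intro E hE
      simp only [mem_powerset] at hE
      simp only [mem_filter, mem_powerset]
      refine ⟨sdiff_subset, ?_⟩
      intro x hx
      simp only [mem_sdiff]
      have := hE
      constructor
      · exact hD hx
      · intro hxE
        have := hE hxE
        simp only [mem_sdiff] at this
        exact this.2 hx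
    · intro C hC
      simp only [mem_filter, mem_powerset] at hC
      exact Finset.sdiff_sdiff_eq_self hC.1
    · intro E hE
      simp only [mem_powerset] at hE
      exact Finset.sdiff_sdiff_eq_self (hE.trans sdiff_subset)
    · intro C hC; rfl
  rw [hbij, alt_sum_real]
  congr 1
  rw [sdiff_eq_empty_iff_subset]
  exact propext ⟨fun h => subset_antisymm hD h, fun h => by rw [h]⟩
  
private lemma mobius_powerset {α : Type*} [DecidableEq α] (f : Finset α → ℝ) (B : Finset α) :
    (∑ C ∈ B.powerset, (-1 : ℝ) ^ (B \ C).card * ∑ D ∈ C.powerset, f D) = f B := by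
  have h1 : (∑ C ∈ B.powerset, (-1 : ℝ) ^ (B \ C).card * ∑ D ∈ C.powerset, f D)
      = ∑ C ∈ B.powerset, ∑ D ∈ C.powerset, (-1 : ℝ) ^ (B \ C).card * f D := by
    refine Finset.sum_congr rfl fun C _ => ?_
    rw [Finset.mul_sum]
  rw [h1]
  rw [Finset.sum_comm' (s' := fun D => B.powerset.filter (fun C => D ⊆ C))
      (t' := B.powerset) (by
        intro C D
        simp only [mem_powerset, mem_filter]
        constructor
        · rintro ⟨h1, h2⟩; exact ⟨⟨h1, h2⟩, h2.trans h1⟩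
        · rintro ⟨⟨h1, h2⟩, _⟩; exact ⟨h1, h2⟩)]
  have h2 : ∀ D ∈ B.powerset,
      (∑ C ∈ B.powerset.filter (fun C => D ⊆ C), (-1 : ℝ) ^ (B \ C).card * f D)
        = (if D = B then 1 else 0) * f D := by
    intro D hD
    rw [← Finset.sum_mul, inner_alt B D (mem_powerset.mp hD)]
  rw [Finset.sum_congr rfl h2]
  simp [Finset.sum_ite_eq' B.powerset B (fun _ => _)]

/-- if no focal element straddles A and its complement, the
    conditional core w.r.t. A is exactly in(A) = {B ∈ F : B ⊆ A}. -/
theorem conditional_core_no_straddle {Θ : Type*} [Fintype Θ] [DecidableEq Θ]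
    (m : Finset Θ → ℝ)
    (h0 : ∀ B, 0 ≤ m B) (h1 : ∀ B, m B ≤ 1)
    (hempty : m ∅ = 0)
    (htotal : ∑ B : Finset Θ, m B = 1)
    (Bl Pl : Finset Θ → ℝ)
    (hBl : ∀ B, Bl B = ∑ C ∈ B.powerset, m C)
    (hPl : ∀ B, Pl B = 1 - Bl Bᶜ)
    (A : Finset Θ) (hA : 0 < Bl A)
    (hnostraddle : ∀ B : Finset Θ, 0 < m B → B ⊆ A ∨ B ⊆ Aᶜ)
    (BlCond mCond : Finset Θ → ℝ)
    (hBlCond : ∀ B, BlCond B = Bl (A ∩ B) / (Bl (A ∩ B) + Pl (A ∩ Bᶜ)))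
    (hmCond : ∀ B : Finset Θ,
        mCond B = ∑ C ∈ B.powerset, (-1 : ℝ) ^ ((B \ C).card) * BlCond C) :
    ∀ B : Finset Θ, 0 < mCond B ↔ (0 < m B ∧ B ⊆ A) := by
  -- indicator mass function restricted to A
  set g : Finset Θ → ℝ := fun C => if C ⊆ A then m C else 0 with hg
  -- Bl as a sum over the whole powerset with indicators
  have hBl' : ∀ X : Finset Θ, Bl X = ∑ C : Finset Θ, (if C ⊆ X then m C else 0) := by
    intro X
    rw [hBl, ← Finset.sum_filter]
    refine (Finset.sum_subset ?_ ?_).symm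
    · intro C hC
      simp only [mem_filter, mem_powerset] at hC ⊢
      exact hC.2
    · intro C hC hC2
      simp only [mem_filter, mem_univ, true_and, mem_powerset] at hC hC2
      exact absurd hC hC2
  -- key pointwise identity
  have hpoint : ∀ (B C : Finset Θ),
      (if C ⊆ A ∩ B then m C else 0) + m C
        = (if C ⊆ A then m C else 0) + (if C ⊆ (A ∩ Bᶜ)ᶜ then m C else 0) := by
    intro B C
    rcases eq_or_lt_of_le (h0 C) with hz | hz
    · simp [← hz]
    rcases hnostraddle C hz with hCA | hCA
    · have h1 : (C ⊆ A ∩ B) ↔ C ⊆ B := by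
        constructor
        · intro h; exact h.trans inter_subset_right
        · intro h; exact subset_inter hCA h
      have h2 : (C ⊆ (A ∩ Bᶜ)ᶜ) ↔ C ⊆ B := by
        simp only [Finset.subset_iff, Finset.mem_compl, Finset.mem_inter, not_and, not_not]
        constructor
        · intro h x hx; exact h hx (hCA hx)
        · intro h x hx _; exact h hx
      simp only [h1, h2, if_pos hCA]
      ring
    · have hCne : C ≠ ∅ := by
        intro h; rw [h] at hz; exact absurd hempty (ne_of_gt hz)
      have hnA : ¬ C ⊆ A := by
        intro h
        apply hCne
        rw [← Finset.subset_empty]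
        intro x hx
        exact absurd (h hx) (Finset.mem_compl.mp (hCA hx))
      have hnAB : ¬ C ⊆ A ∩ B := fun h => hnA (h.trans inter_subset_left)
      have hyes : C ⊆ (A ∩ Bᶜ)ᶜ := by
        intro x hx
        simp only [Finset.mem_compl, Finset.mem_inter, not_and]
        intro hxA
        exact absurd hxA (Finset.mem_compl.mp (hCA hx))
      rw [if_neg hnA, if_neg hnAB, if_pos hyes]
  -- denominator equals Bl A
  have hden : ∀ B : Finset Θ, Bl (A ∩ B) + Pl (A ∩ Bᶜ) = Bl A := by
    intro B
    rw [hPl]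
    have : Bl (A ∩ B) + 1 = Bl A + Bl ((A ∩ Bᶜ)ᶜ) := by
      rw [hBl' (A ∩ B), hBl' A, hBl' ((A ∩ Bᶜ)ᶜ), ← htotal, ← Finset.sum_add_distrib,
        ← Finset.sum_add_distrib]
      exact Finset.sum_congr rfl fun C _ => hpoint B C
    linarith
  -- numerator as sum of g over powerset of B
  have hnum : ∀ B : Finset Θ, Bl (A ∩ B) = ∑ C ∈ B.powerset, g C := by
    intro B
    rw [hBl, ← Finset.sum_filter]
    refine Finset.sum_congr ?_ (fun _ _ => rfl)
    ext C
    simp only [mem_powerset, mem_filter, subset_inter_iff]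
    tauto
  -- BlCond in closed form
  have hBlC : ∀ B : Finset Θ, BlCond B = ∑ C ∈ B.powerset, g C / Bl A := by
    intro B
    rw [hBlCond, hden, hnum, Finset.sum_div]
  -- mCond in closed form via Möbius inversion
  have hmC : ∀ B : Finset Θ, mCond B = g B / Bl A := by
    intro B
    rw [hmCond]
    rw [Finset.sum_congr rfl fun C _ => by rw [hBlC C]]
    exact mobius_powerset (fun D => g D / Bl A) B
  intro B
  rw [hmC]
  rw [div_pos_iff]
  constructor
  · rintro (⟨hgB, _⟩ | ⟨_, hBl0⟩)
    · by_cases hBA : B ⊆ A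
      · rw [hg] at hgB; simp only [if_pos hBA] at hgB; exact ⟨hgB, hBA⟩
      · rw [hg] at hgB; simp only [if_neg hBA] at hgB; linarith
    · linarith
  · rintro ⟨hmB, hBA⟩
    left
    refine ⟨?_, hA⟩
    rw [hg]; simpa [if_pos hBA] using hmB
end
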